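/- arXiv:1311.7238 — 2 statements merged into one kernel-verified Lean document; each statement's English description precedes it below -/
import Mathlib

section
/- Let T be a tree with vertex set V = {1,2,…,N}. If X ⊆ V is nicely-ordered with respect to T, then every subset Y ⊆ X is nicely-ordered with respect to T. -/
open scoped Classical

/-- An edge `e` lies on the unique path between `i` and `j` in the graph `G`
iff its removal disconnects `i` from `j`. -/
def EdgeOnPath {V : Type*} (G : SimpleGraph V) (e : Sym2 V) (i j : V) : Prop :=
  ¬ (G.deleteEdges {e}).Reachable i j

/-- `X = {i₁ < i₂ < ⋯ < i_k}` is nicely ordered w.r.t. `T` if the cyclic tour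
`i₁ → i₂ → ⋯ → i_k → i₁` passes through each edge of `T` at most twice. -/
def NicelyOrdered {N : ℕ} (T : SimpleGraph (Fin N)) (X : Finset (Fin N)) : Prop :=
  ∀ e ∈ T.edgeSet,
    {m : Fin X.card |
      EdgeOnPath T e (X.orderIsoOfFin rfl m) (X.orderIsoOfFin rfl (finRotate X.card m))}.ncard ≤ 2

/-- If a boolean sequence has no change in `[a, b)`, it is constant there. -/
lemma bool_const_of_no_change (F : ℕ → Bool) (a : ℕ) :
    ∀ b, a ≤ b → (∀ p, a ≤ p → p < b → F p = F (p + 1)) → F a = F b := by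
  intro b
  induction b with
  | zero => intro h _; have : a = 0 := by omega
            rw [this]
  | succ b ih =>
    intro hab h
    rcases Nat.lt_or_ge a (b + 1) with h' | h'
    · have hab' : a ≤ b := by omega
      have := ih hab' (fun p hp hpb => h p hp (by omega))
      rw [this]
      exact h b hab' (by omega)
    · have : a = b + 1 := by omega
      rw [this]

lemma bool_ivt (F : ℕ → Bool) {a b : ℕ} (hab : a < b) (hne : F a ≠ F b) :
    ∃ p, a ≤ p ∧ p < b ∧ F p ≠ F (p + 1) := by
  by_contra h
  push_neg at h
  exact hne (bool_const_of_no_change F a b hab.le (fun p hp hpb => h p hp hpb))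

lemma bool_extract (F : ℕ → Bool) {a1 a2 a3 : ℕ} (h12 : a1 < a2) (h23 : a2 < a3)
    (c1 : F a1 ≠ F (a1 + 1)) (c2 : F a2 ≠ F (a2 + 1)) (c3 : F a3 ≠ F (a3 + 1)) :
    ∃ b1 b2 b3 b4, b1 < b2 ∧ b2 < b3 ∧ b3 < b4 ∧ b4 ≤ a3 + 1 ∧
      F b1 ≠ F b2 ∧ F b2 ≠ F b3 ∧ F b3 ≠ F b4 := by
  obtain ⟨b3, hb3a, hb3b, hv3⟩ : ∃ b3, a1 + 1 < b3 ∧ b3 ≤ a2 + 1 ∧ F (a1 + 1) ≠ F b3 := by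
    by_cases h : F a2 = F (a1 + 1)
    · exact ⟨a2 + 1, by omega, le_rfl, fun hc => c2 (h.trans hc)⟩
    · have : a1 + 1 ≠ a2 := fun hc => h (by rw [hc])
      exact ⟨a2, by omega, by omega, fun hc => h hc.symm⟩
  obtain ⟨b4, hb4a, hb4b, hv4⟩ : ∃ b4, b3 < b4 ∧ b4 ≤ a3 + 1 ∧ F b3 ≠ F b4 := by
    by_cases h : F a3 = F b3
    · exact ⟨a3 + 1, by omega, le_rfl, fun hc => c3 (h.symm ▸ hc)⟩
    · have : b3 ≠ a3 := fun hc => h (by rw [hc])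
      exact ⟨a3, by omega, by omega, fun hc => h hc.symm⟩
  exact ⟨a1, a1 + 1, b3, b4, by omega, hb3a, hb4a, hb4b, c1, hv3, hv4⟩

lemma changes_even {k : ℕ} (g : Fin k → Bool) (σ : Equiv.Perm (Fin k)) :
    Even (Finset.univ.filter (fun m => g m ≠ g (σ m))).card := by
  rw [even_iff_two_dvd, ← ZMod.natCast_eq_zero_iff]
  rw [Finset.card_filter]
  push_cast
  have : ∀ m : Fin k, (if g m ≠ g (σ m) then (1 : ZMod 2) else 0) =
      (if g m then 1 else 0) + (if g (σ m) then 1 else 0) := by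
    intro m
    cases hg : g m <;> cases hs : g (σ m) <;> simp [hg, hs] <;> decide
  rw [Finset.sum_congr rfl (fun m _ => this m), Finset.sum_add_distrib,
    Equiv.sum_comp σ (fun m => if g m then (1 : ZMod 2) else 0)]
  exact CharTwo.add_self_eq_zero _

lemma exists_sorted_three {α : Type*} [LinearOrder α] (s : Finset α) (h : 3 ≤ s.card) :
    ∃ q1 ∈ s, ∃ q2 ∈ s, ∃ q3 ∈ s, q1 < q2 ∧ q2 < q3 := by
  have e := s.orderIsoOfFin rfl
  refine ⟨e ⟨0, by omega⟩, (e ⟨0, by omega⟩).2, e ⟨1, by omega⟩, (e ⟨1, by omega⟩).2,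
    e ⟨2, by omega⟩, (e ⟨2, by omega⟩).2, ?_, ?_⟩ <;>
  · exact Subtype.coe_lt_coe.mpr (e.lt_iff_lt.mpr (Fin.mk_lt_mk.mpr (by omega)))

lemma finRotate_val' {k : ℕ} (m : Fin k) (h : m.val + 1 < k) :
    (finRotate k m).val = m.val + 1 := by
  cases k with
  | zero => exact m.elim0
  | succ n =>
    rw [finRotate_succ_apply]
    exact Fin.val_add_one_of_lt (by rw [Fin.lt_iff_val_lt_val, Fin.val_last]; omega)

lemma walk_delete_cases {V : Type*} (G : SimpleGraph V) (a b : V) {v x : V}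
    (w : G.Walk v x) :
    (G.deleteEdges {s(a, b)}).Reachable v x ∨
      ((G.deleteEdges {s(a, b)}).Reachable v a ∧ (G.deleteEdges {s(a, b)}).Reachable b x) ∨
      ((G.deleteEdges {s(a, b)}).Reachable v b ∧ (G.deleteEdges {s(a, b)}).Reachable a x) := by
  induction w with
  | nil => exact Or.inl (SimpleGraph.Reachable.refl _)
  | @cons v u x hadj p ih =>
    by_cases he : s(v, u) = s(a, b)
    · rw [Sym2.eq_iff] at he
      rcases he with ⟨hva, hub⟩ | ⟨hvb, hua⟩
      · subst hva; subst hub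
        rcases ih with h | ⟨h1, h2⟩ | ⟨h1, h2⟩
        · exact Or.inr (Or.inl ⟨SimpleGraph.Reachable.refl _, h⟩)
        · exact Or.inr (Or.inl ⟨SimpleGraph.Reachable.refl _, h2⟩)
        · exact Or.inl h2
      · subst hvb; subst hua
        rcases ih with h | ⟨h1, h2⟩ | ⟨h1, h2⟩
        · exact Or.inr (Or.inr ⟨SimpleGraph.Reachable.refl _, h⟩)
        · exact Or.inl h2
        · exact Or.inr (Or.inr ⟨SimpleGraph.Reachable.refl _, h2⟩)
    · have hadj' : (G.deleteEdges {s(a, b)}).Adj v u := by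
        rw [SimpleGraph.deleteEdges_adj]
        exact ⟨hadj, by simpa using he⟩
      rcases ih with h | ⟨h1, h2⟩ | ⟨h1, h2⟩
      · exact Or.inl (hadj'.reachable.trans h)
      · exact Or.inr (Or.inl ⟨hadj'.reachable.trans h1, h2⟩)
      · exact Or.inr (Or.inr ⟨hadj'.reachable.trans h1, h2⟩)

lemma reachable_delete_endpoints {V : Type*} (G : SimpleGraph V) (a b : V) (v : V)
    (h : G.Reachable v a) :
    (G.deleteEdges {s(a, b)}).Reachable v a ∨ (G.deleteEdges {s(a, b)}).Reachable v b := by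
  obtain ⟨w⟩ := h
  rcases walk_delete_cases G a b w with h | ⟨h1, h2⟩ | ⟨h1, h2⟩
  · exact Or.inl h
  · exact Or.inl h1
  · exact Or.inr h1

lemma edgeOnPath_iff_color {V : Type*} (G : SimpleGraph V) (hc : G.Preconnected)
    (a b : V) (i j : V) :
    EdgeOnPath G s(a, b) i j ↔
      ¬ ((G.deleteEdges {s(a, b)}).Reachable i a ↔ (G.deleteEdges {s(a, b)}).Reachable j a) := by
  set G' := G.deleteEdges {s(a, b)} with hG'
  have dich : ∀ v, G'.Reachable v a ∨ G'.Reachable v b :=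
    fun v => reachable_delete_endpoints G a b v (hc v a)
  have key : G'.Reachable i j ↔ (G'.Reachable i a ↔ G'.Reachable j a) := by
    constructor
    · intro h; exact ⟨fun hia => h.symm.trans hia, fun hja => h.trans hja⟩
    · intro h
      by_cases hia : G'.Reachable i a
      · exact hia.trans (h.mp hia).symm
      · have hja : ¬ G'.Reachable j a := fun hj => hia (h.mpr hj)
        rcases dich i with h1 | h1
        · exact absurd h1 hia
        rcases dich j with h2 | h2
        · exact absurd h2 hja
        exact h1.trans h2.symm
  unfold EdgeOnPath
  rw [← hG', key]

set_option maxHeartbeats 1000000 in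
/-- **Heredity of nice orderings**: every subset of a nicely-ordered vertex set
of a tree is nicely ordered. -/
theorem nicelyOrdered_subset (N : ℕ) (T : SimpleGraph (Fin N)) (hT : T.IsTree)
    (X : Finset (Fin N)) (hX : NicelyOrdered T X) (Y : Finset (Fin N)) (hYX : Y ⊆ X) :
    NicelyOrdered T Y := by

  intro e he
  induction e using Sym2.ind with
  | _ a b =>
  by_contra hcon
  push_neg at hcon
  -- the two-coloring of vertices
  set c : Fin N → Bool := fun v => decide ((T.deleteEdges {s(a, b)}).Reachable v a) with hc
  have hcolor : ∀ i j : Fin N, EdgeOnPath T s(a, b) i j ↔ c i ≠ c j := by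
    intro i j
    simp only [hc, ne_eq, decide_eq_decide]
    exact edgeOnPath_iff_color T hT.isConnected.preconnected a b i j
  set g : Fin Y.card → Bool := fun m => c (Y.orderIsoOfFin rfl m : Fin N) with hg
  set f : Fin X.card → Bool := fun m => c (X.orderIsoOfFin rfl m : Fin N) with hf
  -- transfer the hypothesis to a Finset cardinality
  have hset : {m : Fin Y.card | EdgeOnPath T s(a, b) (Y.orderIsoOfFin rfl m)
        (Y.orderIsoOfFin rfl (finRotate Y.card m))} =
      ↑(Finset.univ.filter (fun m : Fin Y.card => g m ≠ g (finRotate Y.card m))) := by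
    ext m
    simp only [Finset.coe_filter, Finset.mem_univ, true_and, Set.mem_setOf_eq, hg]
    exact hcolor _ _
  rw [hset, Set.ncard_coe_finset] at hcon
  have hsY : 2 <
      (Finset.univ.filter (fun m : Fin Y.card => g m ≠ g (finRotate Y.card m))).card := hcon
  have heven := changes_even g (finRotate Y.card)
  have h4 : 4 ≤
      (Finset.univ.filter (fun m : Fin Y.card => g m ≠ g (finRotate Y.card m))).card := by
    rcases heven with ⟨t, ht⟩
    omega
  have hk0 : 0 < Y.card := by
    obtain ⟨m, -⟩ := Finset.card_pos.mp (by omega :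
      0 < (Finset.univ.filter (fun m : Fin Y.card => g m ≠ g (finRotate Y.card m))).card)
    exact m.pos
  -- remove the last element, get three sorted change positions not at the wrap-around
  set s' := (Finset.univ.filter
      (fun m : Fin Y.card => g m ≠ g (finRotate Y.card m))).erase ⟨Y.card - 1, by omega⟩
    with hs'
  have hs'3 : 3 ≤ s'.card := by
    rw [hs']
    refine le_trans ?_ Finset.pred_card_le_card_erase
    omega
  obtain ⟨q1, hq1, q2, hq2, q3, hq3, h12, h23⟩ := exists_sorted_three s' hs'3
  have hqlt : ∀ q ∈ s', q.val + 1 < Y.card := by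
    intro q hq
    have hne := Finset.ne_of_mem_erase hq
    have : q.val ≠ Y.card - 1 := fun hv => hne (Fin.ext hv)
    omega
  have hqmem : ∀ q ∈ s', g q ≠ g (finRotate Y.card q) := by
    intro q hq
    exact (Finset.mem_filter.mp (Finset.mem_of_mem_erase hq)).2
  -- boolean sequence on ℕ for Y
  set GY : ℕ → Bool := fun i => if h : i < Y.card then g ⟨i, h⟩ else true with hGY
  have hchange : ∀ q ∈ s', GY q.val ≠ GY (q.val + 1) := by
    intro q hq
    have hlt := hqlt q hq
    have e1 : GY q.val = g q := by rw [hGY]; simp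
    have e2 : GY (q.val + 1) = g (finRotate Y.card q) := by
      rw [hGY]
      simp only [dif_pos hlt]
      congr 1
      exact Fin.ext (finRotate_val' q hlt).symm
    rw [e1, e2]
    exact hqmem q hq
  obtain ⟨b1, b2, b3, b4, hb12, hb23, hb34, hb4, hv1, hv2, hv3⟩ :=
    bool_extract GY (show q1.val < q2.val from h12) (show q2.val < q3.val from h23)
      (hchange q1 hq1) (hchange q2 hq2) (hchange q3 hq3)
  have hb4k : b4 < Y.card := lt_of_le_of_lt hb4 (hqlt q3 hq3)
  have hb1k : b1 < Y.card := by omega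
  have hb2k : b2 < Y.card := by omega
  have hb3k : b3 < Y.card := by omega
  -- the order embedding of positions of Y into positions of X
  set emb : Fin Y.card → Fin X.card := fun m =>
    (X.orderIsoOfFin rfl).symm ⟨(Y.orderIsoOfFin rfl m : Fin N),
      hYX (Y.orderIsoOfFin rfl m).2⟩ with hemb
  have emb_mono : StrictMono emb := by
    intro u v huv
    apply (X.orderIsoOfFin rfl).symm.lt_iff_lt.mpr
    rw [Subtype.mk_lt_mk]
    exact Subtype.coe_lt_coe.mpr ((Y.orderIsoOfFin rfl).lt_iff_lt.mpr huv)
  have emb_f : ∀ m, f (emb m) = g m := by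
    intro m
    rw [hf, hemb]
    simp only
    rw [OrderIso.apply_symm_apply]
  -- boolean sequence on ℕ for X
  set FX : ℕ → Bool := fun i => if h : i < X.card then f ⟨i, h⟩ else true with hFX
  have hFemb : ∀ (i : ℕ) (h : i < Y.card), FX (emb ⟨i, h⟩).val = GY i := by
    intro i h
    rw [hFX, hGY]
    simp only [dif_pos (emb ⟨i, h⟩).isLt, dif_pos h, Fin.eta]
    exact emb_f ⟨i, h⟩
  obtain ⟨P1, hP1⟩ : ∃ P, emb ⟨b1, hb1k⟩ = P := ⟨_, rfl⟩
  obtain ⟨P2, hP2⟩ : ∃ P, emb ⟨b2, hb2k⟩ = P := ⟨_, rfl⟩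
  obtain ⟨P3, hP3⟩ : ∃ P, emb ⟨b3, hb3k⟩ = P := ⟨_, rfl⟩
  obtain ⟨P4, hP4⟩ : ∃ P, emb ⟨b4, hb4k⟩ = P := ⟨_, rfl⟩
  have hP12 : P1.val < P2.val := by
    rw [← hP1, ← hP2]; exact emb_mono (Fin.mk_lt_mk.mpr hb12)
  have hP23 : P2.val < P3.val := by
    rw [← hP2, ← hP3]; exact emb_mono (Fin.mk_lt_mk.mpr hb23)
  have hP34 : P3.val < P4.val := by
    rw [← hP3, ← hP4]; exact emb_mono (Fin.mk_lt_mk.mpr hb34)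
  have hF1 : FX P1.val ≠ FX P2.val := by
    rw [← hP1, ← hP2, hFemb b1 hb1k, hFemb b2 hb2k]; exact hv1
  have hF2 : FX P2.val ≠ FX P3.val := by
    rw [← hP2, ← hP3, hFemb b2 hb2k, hFemb b3 hb3k]; exact hv2
  have hF3 : FX P3.val ≠ FX P4.val := by
    rw [← hP3, ← hP4, hFemb b3 hb3k, hFemb b4 hb4k]; exact hv3
  obtain ⟨p1, hp1a, hp1b, hp1⟩ := bool_ivt FX hP12 hF1
  obtain ⟨p2, hp2a, hp2b, hp2⟩ := bool_ivt FX hP23 hF2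
  obtain ⟨p3, hp3a, hp3b, hp3⟩ := bool_ivt FX hP34 hF3
  have hP4n : P4.val < X.card := P4.isLt
  -- the three witnesses in the X change set
  have hmem : ∀ (p : ℕ) (hplt : p < X.card), p + 1 < X.card → FX p ≠ FX (p + 1) →
      (⟨p, hplt⟩ : Fin X.card) ∈ {m : Fin X.card | EdgeOnPath T s(a, b)
        (X.orderIsoOfFin rfl m) (X.orderIsoOfFin rfl (finRotate X.card m))} := by
    intro p hplt hpn hpne
    rw [Set.mem_setOf_eq, hcolor]
    have e1 : c (X.orderIsoOfFin rfl (⟨p, hplt⟩ : Fin X.card) : Fin N) = FX p := by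
      rw [hFX]; simp only [dif_pos hplt]; rfl
    have e2 : c (X.orderIsoOfFin rfl (finRotate X.card ⟨p, hplt⟩) : Fin N) = FX (p + 1) := by
      have : finRotate X.card ⟨p, hplt⟩ = (⟨p + 1, hpn⟩ : Fin X.card) :=
        Fin.ext (finRotate_val' ⟨p, hplt⟩ hpn)
      rw [this, hFX]
      simp only [dif_pos hpn]; rfl
    rw [e1, e2]
    exact hpne
  have h1n : p1 + 1 ≤ P2.val := hp1b
  have h2n : p2 + 1 ≤ P3.val := hp2b
  have h3n : p3 + 1 ≤ P4.val := hp3b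
  have key : 2 < {m : Fin X.card | EdgeOnPath T s(a, b)
      (X.orderIsoOfFin rfl m) (X.orderIsoOfFin rfl (finRotate X.card m))}.ncard := by
    rw [Set.two_lt_ncard]
    refine ⟨⟨p1, by omega⟩, hmem p1 (by omega) (by omega) hp1,
      ⟨p2, by omega⟩, hmem p2 (by omega) (by omega) hp2,
      ⟨p3, by omega⟩, hmem p3 (by omega) (by omega) hp3,
      ne_of_lt (Fin.mk_lt_mk.mpr (by omega)), ne_of_lt (Fin.mk_lt_mk.mpr (by omega)),
      ne_of_lt (Fin.mk_lt_mk.mpr (by omega))⟩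
  exact absurd key (not_lt.mpr (hX s(a, b) he))
end

section
/- Let T be a tree with vertex set V = {1,2,…,N} and let X = {i_1, i_2, …, i_{2n}} ⊆ V with i_1 < i_2 < ⋯ < i_{2n} and n ≥ 1 be nicely-ordered with respect to T. Then there exists a partition of the index set {1,…,2n} into n pairs {p_1,q_1}, …, {p_n,q_n} such that (i) p_k + q_k is odd for every k = 1,…,n, and (ii) the edge sets P_{i_{p_1} i_{q_1}}, …, P_{i_{p_n} i_{q_n}} are pairwise disjoint and their union equals O_X. -/
open scoped Classical

/-- An edge `e` of `T` is odd w.r.t. `X` if each of the two components of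
`T − e` contains an odd number of vertices of `X`. -/
def OddEdge {N : ℕ} (T : SimpleGraph (Fin N)) (X : Finset (Fin N)) (e : Sym2 (Fin N)) : Prop :=
  e ∈ T.edgeSet ∧
    ∀ u ∈ e, Odd {x : Fin N | x ∈ X ∧ (T.deleteEdges {e}).Reachable u x}.ncard

lemma finRotate_eq_add_one {k : ℕ} [NeZero k] (i : Fin k) : finRotate k i = i + 1 := by
  rcases k with _ | k
  · exact absurd rfl (NeZero.ne 0)
  · exact finRotate_succ_apply i

lemma crossings_even {k : ℕ} (g : Fin k → Bool) :
    Even ((Finset.univ.filter fun p => g p ≠ g (finRotate k p)).card) := by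
  rcases Nat.eq_zero_or_pos k with hk | hk
  · subst hk; simp
  have h2 : ((Finset.univ.filter fun p => g p ≠ g (finRotate k p)).card : ZMod 2) = 0 := by
    rw [Finset.card_filter, Nat.cast_sum]
    have : ∀ p : Fin k, ((if g p ≠ g (finRotate k p) then (1:ℕ) else 0 : ℕ) : ZMod 2)
        = (cond (g p) 1 0 + cond (g (finRotate k p)) 1 0 : ZMod 2) := by
      intro p
      cases hp : g p <;> cases hq : g (finRotate k p) <;> simp [hp, hq] <;> decide
    rw [Finset.sum_congr rfl (fun p _ => this p), Finset.sum_add_distrib]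
    rw [Equiv.sum_comp (finRotate k) (fun q => (cond (g q) 1 0 : ZMod 2))]
    rw [← two_mul]
    simp [show (2 : ZMod 2) = 0 by decide]
  have := (ZMod.natCast_eq_zero_iff _ 2).mp h2
  exact even_iff_two_dvd.mpr this
variable {V : Type*} {T : SimpleGraph V}

/-- In a connected graph, after deleting edge s(u,v), every vertex reaches u or v. -/
lemma reach_endpoint (hc : T.Connected) {u v : V} (h : T.Adj u v) (x : V) :
    (T.deleteEdges {s(u,v)}).Reachable u x ∨ (T.deleteEdges {s(u,v)}).Reachable v x := by
  have aux : ∀ {a b : V} (_ : T.Walk a b),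
      ((T.deleteEdges {s(u,v)}).Reachable u a ∨ (T.deleteEdges {s(u,v)}).Reachable v a) →
      ((T.deleteEdges {s(u,v)}).Reachable u b ∨ (T.deleteEdges {s(u,v)}).Reachable v b) := by
    intro a b p
    induction p with
    | nil => exact id
    | @cons a c b hac q ih =>
      intro ha
      apply ih
      by_cases he : s(a, c) = s(u, v)
      · rw [Sym2.eq_iff] at he
        rcases he with ⟨rfl, rfl⟩ | ⟨rfl, rfl⟩
        · right; rfl
        · left; rfl
      · have hadj : (T.deleteEdges {s(u,v)}).Adj a c := by
          rw [SimpleGraph.deleteEdges_adj]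
          exact ⟨hac, by simpa using he⟩
        rcases ha with ha | ha
        · exact Or.inl (ha.trans hadj.reachable)
        · exact Or.inr (ha.trans hadj.reachable)
  obtain ⟨p⟩ := hc.preconnected u x
  exact aux p (Or.inl (SimpleGraph.Reachable.refl u))

lemma not_reach_endpoints (hT : T.IsTree) {u v : V} (h : T.Adj u v) :
    ¬ (T.deleteEdges {s(u,v)}).Reachable u v := by
  have hb := SimpleGraph.isAcyclic_iff_forall_edge_isBridge.mp hT.2 (T.mem_edgeSet.mpr h)
  exact SimpleGraph.isBridge_iff.mp hb

/-- If x,y are not reachable in T−f, then the endpoints of f lie on any T-walk from x to y. -/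
lemma endpoints_on_walk {f : Sym2 V} {x y : V}
    (h : ¬ (T.deleteEdges {f}).Reachable x y) (p : T.Walk x y) :
    ∃ a b : V, f = s(a,b) ∧ a ∈ p.support ∧ b ∈ p.support := by
  have hf : f ∈ p.edges := by
    by_contra hf
    exact h ⟨p.toDeleteEdges {f} (by intro e' he'; simp only [Set.mem_singleton_iff]
                                     rintro rfl; exact hf he')⟩
  induction f using Sym2.ind with
  | _ a b => exact ⟨a, b, rfl, p.fst_mem_support_of_mem_edges hf, p.snd_mem_support_of_mem_edges hf⟩

/-- Reachability in T−e is equivalent to being on the same side as seen from v₀. -/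
lemma reach_iff_side (hT : T.IsTree) (v₀ : V) (e : Sym2 V) (x y : V) :
    (T.deleteEdges {e}).Reachable x y ↔
      ((T.deleteEdges {e}).Reachable x v₀ ↔ (T.deleteEdges {e}).Reachable y v₀) := by
  by_cases he : e ∈ T.edgeSet
  · induction e using Sym2.ind with
  | _ u v =>
    have hadj : T.Adj u v := T.mem_edgeSet.mp he
    have dich := fun z => reach_endpoint hT.1 hadj z
    have nr := not_reach_endpoints hT hadj
    constructor
    · intro hxy
      exact ⟨fun h => hxy.symm.trans h, fun h => hxy.trans h⟩
    · intro hiff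
      rcases dich x with hx | hx <;> rcases dich y with hy | hy
      · exact hx.symm.trans hy
      · exfalso
        rcases dich v₀ with hv | hv
        · exact nr (hv.trans ((hiff.mp (hx.symm.trans hv)).symm.trans hy.symm))
        · exact nr (hx.trans ((hiff.mpr (hy.symm.trans hv)).trans hv.symm))
      · exfalso
        rcases dich v₀ with hv | hv
        · exact nr ((hx.trans ((hiff.mpr (hy.symm.trans hv)).trans hv.symm)).symm)
        · exact nr ((hv.trans ((hiff.mp (hx.symm.trans hv)).symm.trans hy.symm)).symm)
      · exact hx.symm.trans hy
  · have hdel : T.deleteEdges {e} = T := by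
      ext a b
      rw [SimpleGraph.deleteEdges_adj]
      simp only [Set.mem_singleton_iff, and_iff_left_iff_imp]
      rintro hab rfl
      exact he hab
    rw [hdel]
    have hc := hT.1.preconnected
    exact iff_of_true (hc x y) (iff_of_true (hc x v₀) (hc y v₀))

/-- Laminarity of tree cuts, seen from a base vertex v₀. -/
lemma tree_laminar (hT : T.IsTree) (v₀ : V) {e f : Sym2 V}
    (he : e ∈ T.edgeSet) (hf : f ∈ T.edgeSet) :
    (∀ x, (T.deleteEdges {f}).Reachable x v₀ → (T.deleteEdges {e}).Reachable x v₀) ∨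
    (∀ x, (T.deleteEdges {e}).Reachable x v₀ → (T.deleteEdges {f}).Reachable x v₀) ∨
    (∀ x, ¬((T.deleteEdges {e}).Reachable x v₀ ∧ (T.deleteEdges {f}).Reachable x v₀)) ∨
    (∀ x, (T.deleteEdges {e}).Reachable x v₀ ∨ (T.deleteEdges {f}).Reachable x v₀) := by
  set Re := fun x => (T.deleteEdges {e}).Reachable x v₀ with hRe
  set Rf := fun x => (T.deleteEdges {f}).Reachable x v₀ with hRf
  by_contra hcon
  push_neg at hcon
  obtain ⟨⟨x3, hx3f, hx3e⟩, ⟨x2, hx2e, hx2f⟩, ⟨x1, hx1e, hx1f⟩, ⟨x4, hx4e, hx4f⟩⟩ := hcon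
  -- whenever x, y are in the same component of T−e but different f-sides,
  -- both endpoints of f are in the component of x (in T−e).
  have key : ∀ x y : V, (T.deleteEdges {e}).Reachable x y → ¬ (T.deleteEdges {f}).Reachable x y →
      ∃ a b : V, f = s(a,b) ∧ (T.deleteEdges {e}).Reachable x a ∧
        (T.deleteEdges {e}).Reachable x b := by
    intro x y hxy hnxy
    obtain ⟨p⟩ := hxy
    have hedges : ∀ e' ∈ p.edges, e' ∈ T.edgeSet := by
      intro e' he'
      have := p.edges_subset_edgeSet he'
      rw [SimpleGraph.edgeSet_deleteEdges] at this
      exact this.1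
    obtain ⟨a, b, hfab, ha, hb⟩ := endpoints_on_walk hnxy (p.transfer T hedges)
    rw [SimpleGraph.Walk.support_transfer] at ha hb
    exact ⟨a, b, hfab, ⟨p.takeUntil a ha⟩, ⟨p.takeUntil b hb⟩⟩
  -- part 1 : x1 x2 both in the v₀-side of e, different f-sides
  have h12 : (T.deleteEdges {e}).Reachable x1 x2 := hx1e.trans hx2e.symm
  have h12f : ¬ (T.deleteEdges {f}).Reachable x1 x2 := fun h => hx2f (h.symm.trans hx1f)
  obtain ⟨a, b, hfab, ha, hb⟩ := key x1 x2 h12 h12f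
  have hae : Re a := ha.symm.trans hx1e
  have hbe : Re b := hb.symm.trans hx1e
  -- part 2 : x3 x4 both outside the v₀-side of e, different f-sides
  have h34 : (T.deleteEdges {e}).Reachable x3 x4 := by
    induction e using Sym2.ind with
    | _ u v =>
      have hadj : T.Adj u v := T.mem_edgeSet.mp he
      have dich := fun z => reach_endpoint hT.1 hadj z
      rcases dich v₀ with hv | hv
      · have h3 : (T.deleteEdges {s(u,v)}).Reachable v x3 := by
          rcases dich x3 with h | h
          · exact absurd (h.symm.trans hv) hx3e
          · exact h
        have h4 : (T.deleteEdges {s(u,v)}).Reachable v x4 := by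
          rcases dich x4 with h | h
          · exact absurd (h.symm.trans hv) hx4e
          · exact h
        exact h3.symm.trans h4
      · have h3 : (T.deleteEdges {s(u,v)}).Reachable u x3 := by
          rcases dich x3 with h | h
          · exact h
          · exact absurd (h.symm.trans hv) hx3e
        have h4 : (T.deleteEdges {s(u,v)}).Reachable u x4 := by
          rcases dich x4 with h | h
          · exact h
          · exact absurd (h.symm.trans hv) hx4e
        exact h3.symm.trans h4
  have h34f : ¬ (T.deleteEdges {f}).Reachable x3 x4 := fun h => hx4f (h.symm.trans hx3f)
  obtain ⟨a', b', hfab', ha', hb'⟩ := key x3 x4 h34 h34f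
  -- a' is one of a, b, hence in the v₀-side of e; but a' is reachable from x3, contradiction.
  have haa : a' = a ∨ a' = b := by
    rw [hfab] at hfab'
    rw [Sym2.eq_iff] at hfab'
    rcases hfab' with ⟨h1, _⟩ | ⟨_, h2⟩
    · exact Or.inl h1.symm
    · exact Or.inr h2.symm
  have hae' : Re a' := by rcases haa with rfl | rfl <;> assumption
  exact hx3e (ha'.trans hae')

lemma finRotate_eq_add_one' {k : ℕ} [NeZero k] (i : Fin k) : finRotate k i = i + 1 := by
  rcases k with _ | k
  · exact absurd rfl (NeZero.ne 0)
  · exact finRotate_succ_apply i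

lemma exists_good {k : ℕ} (hk2 : 2 ≤ k) (hkeven : Even k) {ι : Type*} (g : ι → Fin k → Bool)
    (hcross : ∀ i, ((Finset.univ.filter fun p => g i p ≠ g i (finRotate k p)).card ≤ 2))
    (hlam : ∀ i i',
      (∀ p, g i p = true → g i' p = true) ∨ (∀ p, g i' p = true → g i p = true) ∨
      (∀ p, ¬(g i p = true ∧ g i' p = true)) ∨ (∀ p, g i p = true ∨ g i' p = true)) :
    ∃ m : Fin k, ∀ i, g i m ≠ g i (finRotate k m) →
      Odd ((Finset.univ.filter fun p => g i p = true).card) := by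
  haveI : NeZero k := ⟨by omega⟩
  simp only [finRotate_eq_add_one'] at hcross ⊢
  set S : ι → Finset (Fin k) := fun i => Finset.univ.filter (fun p => g i p = true) with hS
  have memS : ∀ i p, p ∈ S i ↔ g i p = true := by intro i p; simp [hS]
  have memcoS : ∀ i p, p ∈ Finset.univ \ S i ↔ g i p = false := by
    intro i p; simp [hS, Bool.not_eq_true]
  set Bad : ι → Prop := fun i => Even (S i).card ∧ ∃ p, g i p ≠ g i (p+1) with hBadDef
  by_cases hbad : ∃ i, Bad i
  · obtain ⟨i₀, hi₀⟩ := hbad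
    set 𝒜 : Finset (Finset (Fin k)) :=
      Finset.univ.filter (fun A => ∃ i, Bad i ∧ (A = S i ∨ A = Finset.univ \ S i)) with h𝒜
    have hane : 𝒜.Nonempty := ⟨S i₀, by
      rw [h𝒜, Finset.mem_filter]
      exact ⟨Finset.mem_univ _, ⟨i₀, hi₀, Or.inl rfl⟩⟩⟩
    obtain ⟨A, hA𝒜, hAmin⟩ := 𝒜.exists_min_image Finset.card hane
    obtain ⟨i₁, hbad₁, hA₁⟩ := (Finset.mem_filter.mp hA𝒜).2
    have hcard_co : ∀ i, (Finset.univ \ S i).card = k - (S i).card := by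
      intro i
      rw [Finset.card_sdiff_of_subset (Finset.subset_univ _), Finset.card_univ, Fintype.card_fin]
    have hAeven : Even A.card := by
      rcases hA₁ with rfl | rfl
      · exact hbad₁.1
      · rw [hcard_co]
        rw [Nat.even_sub (by
          calc (S i₁).card ≤ Finset.univ.card := Finset.card_le_card (Finset.subset_univ _)
          _ = k := by rw [Finset.card_univ, Fintype.card_fin])]
        simp [hkeven, hbad₁.1]
    -- A describes a side of i₁ via a fixed boolean value c
    have hAg : ∃ c : Bool, ∀ p, (p ∈ A ↔ g i₁ p = c) := by
      rcases hA₁ with rfl | rfl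
      · exact ⟨true, fun p => memS i₁ p⟩
      · exact ⟨false, fun p => memcoS i₁ p⟩
    obtain ⟨c, hc⟩ := hAg
    have hApos : A.Nonempty := by
      obtain ⟨p, hp⟩ := hbad₁.2
      by_cases h1 : g i₁ p = c
      · exact ⟨p, (hc p).mpr h1⟩
      · refine ⟨p + 1, (hc (p+1)).mpr ?_⟩
        cases hgc : g i₁ (p+1)
        · cases hgp : g i₁ p
          · rw [hgc, hgp] at hp; exact absurd rfl hp
          · cases c
            · rfl
            · rw [hgp] at h1; exact absurd rfl h1
        · cases hgp : g i₁ p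
          · cases c
            · rw [hgp] at h1; exact absurd rfl h1
            · rfl
          · rw [hgc, hgp] at hp; exact absurd rfl hp
    have h2A : 2 ≤ A.card := by
      obtain ⟨t, ht⟩ := hAeven
      have := Finset.card_pos.mpr hApos
      omega
    -- A contains two cyclically-adjacent positions
    have hadjA : ∃ m, m ∈ A ∧ m + 1 ∈ A := by
      by_contra hno
      push_neg at hno
      have hsub : A ∪ A.image (fun m => m - 1) ⊆
          Finset.univ.filter (fun p => g i₁ p ≠ g i₁ (p+1)) := by
        intro x hx
        rw [Finset.mem_union] at hx
        rw [Finset.mem_filter]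
        refine ⟨Finset.mem_univ _, ?_⟩
        rcases hx with hx | hx
        · have h1 : g i₁ x = c := (hc x).mp hx
          have h2 : ¬ (g i₁ (x+1) = c) := fun h => hno x hx ((hc _).mpr h)
          intro h; rw [h] at h1; exact h2 h1
        · rw [Finset.mem_image] at hx
          obtain ⟨m', hm', rfl⟩ := hx
          have hq1 : m' - 1 + 1 = m' := sub_add_cancel m' 1
          have h2 : g i₁ (m' - 1 + 1) = c := by rw [hq1]; exact (hc _).mp hm'
          have h1 : ¬ (g i₁ (m' - 1) = c) := by
            intro h
            exact hno (m' - 1) ((hc _).mpr h) (by rw [hq1]; exact hm')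
          intro h; rw [← h] at h2; exact h1 h2
      have hdisj : Disjoint A (A.image (fun m => m - 1)) := by
        rw [Finset.disjoint_left]
        intro x hxA hxI
        rw [Finset.mem_image] at hxI
        obtain ⟨m', hm', hx⟩ := hxI
        apply hno x hxA
        subst hx
        rw [sub_add_cancel]
        exact hm'
      have hinj : Function.Injective (fun m : Fin k => m - 1) := fun a b h => by
        have := congrArg (fun x => x + 1) h
        simpa [sub_add_cancel] using this
      have hcu : (A ∪ A.image (fun m => m - 1)).card = 2 * A.card := by
        rw [Finset.card_union_of_disjoint hdisj, Finset.card_image_of_injective _ hinj]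
        ring
      have := Finset.card_le_card hsub
      have h2' := hcross i₁
      omega
    obtain ⟨m, hmA, hm1A⟩ := hadjA
    refine ⟨m, fun i hcr => ?_⟩
    rw [← Nat.not_even_iff_odd]
    intro hev
    have hbadi : Bad i := ⟨hev, ⟨m, hcr⟩⟩
    -- a side B of i contained in A or in its complement
    have hB : ∃ B, (B = S i ∨ B = Finset.univ \ S i) ∧ ((B ⊆ S i₁) ∨ (B ⊆ Finset.univ \ S i₁)) := by
      rcases hlam i i₁ with h | h | h | h
      · exact ⟨S i, Or.inl rfl, Or.inl (fun p hp => (memS i₁ p).mpr (h p ((memS i p).mp hp)))⟩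
      · refine ⟨Finset.univ \ S i, Or.inr rfl, Or.inr (fun p hp => ?_)⟩
        rw [memcoS] at hp ⊢
        cases hp1 : g i₁ p
        · rfl
        · have := h p hp1; rw [this] at hp; exact hp
      · refine ⟨S i, Or.inl rfl, Or.inr (fun p hp => ?_)⟩
        rw [memS] at hp; rw [memcoS]
        cases hp1 : g i₁ p
        · rfl
        · exact absurd ⟨hp, hp1⟩ (h p)
      · refine ⟨Finset.univ \ S i, Or.inr rfl, Or.inl (fun p hp => ?_)⟩
        rw [memcoS] at hp; rw [memS]
        rcases h p with h' | h'
        · rw [hp] at h'; exact absurd h' (by simp)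
        · exact h'
    obtain ⟨B, hBside, hBsub⟩ := hB
    have hBsub' : B ⊆ A ∨ B ⊆ Finset.univ \ A := by
      have hcompl : Finset.univ \ (Finset.univ \ S i₁) = S i₁ := by
        rw [Finset.sdiff_sdiff_self_left, Finset.univ_inter]
      rcases hA₁ with rfl | rfl
      · exact hBsub
      · rcases hBsub with h | h
        · exact Or.inr (by rw [hcompl]; exact h)
        · exact Or.inl h
    -- exactly one of m, m+1 lies in B
    have honeB : (m ∈ B ∧ m+1 ∉ B) ∨ (m ∉ B ∧ m+1 ∈ B) := by
      rcases hBside with rfl | rfl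
      · by_cases h : m ∈ S i
        · refine Or.inl ⟨h, fun h1 => ?_⟩
          rw [memS] at h h1; rw [h, h1] at hcr; exact hcr rfl
        · refine Or.inr ⟨h, ?_⟩
          rw [memS] at h ⊢
          cases h2 : g i (m+1)
          · cases h3 : g i m
            · exact (hcr (h3.trans h2.symm)).elim
            · exact absurd h3 h
          · rfl
      · by_cases h : m ∈ Finset.univ \ S i
        · refine Or.inl ⟨h, fun h1 => ?_⟩
          rw [memcoS] at h h1; rw [h, h1] at hcr; exact hcr rfl
        · refine Or.inr ⟨h, ?_⟩
          rw [memcoS] at h ⊢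
          cases h2 : g i (m+1)
          · rfl
          · cases h3 : g i m
            · exact absurd h3 h
            · exact (hcr (h3.trans h2.symm)).elim
    rcases hBsub' with hsub | hsub
    · have hB𝒜 : B ∈ 𝒜 := by
        rw [h𝒜, Finset.mem_filter]
        exact ⟨Finset.mem_univ _, ⟨i, hbadi, hBside⟩⟩
      have hBA : B = A := Finset.eq_of_subset_of_card_le hsub (hAmin B hB𝒜)
      subst hBA
      rcases honeB with ⟨_, h2⟩ | ⟨h1, _⟩
      · exact h2 hm1A
      · exact h1 hmA
    · rcases honeB with ⟨h1, _⟩ | ⟨_, h2⟩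
      · exact (Finset.mem_sdiff.mp (hsub h1)).2 hmA
      · exact (Finset.mem_sdiff.mp (hsub h2)).2 hm1A
  · refine ⟨⟨0, by omega⟩, fun i hcr => ?_⟩
    rw [← Nat.not_even_iff_odd]
    intro hev
    exact hbad ⟨i, hev, ⟨_, hcr⟩⟩

lemma comb : ∀ (n : ℕ), 1 ≤ n → ∀ {ι : Type*} (g : ι → Fin (2*n) → Bool),
    (∀ i, ((Finset.univ.filter fun p => g i p ≠ g i (finRotate (2*n) p)).card ≤ 2)) →
    (∀ i i', (∀ p, g i p = true → g i' p = true) ∨ (∀ p, g i' p = true → g i p = true) ∨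
      (∀ p, ¬(g i p = true ∧ g i' p = true)) ∨ (∀ p, g i p = true ∨ g i' p = true)) →
    ∃ σ : Fin n × Bool ≃ Fin (2*n),
      (∀ k : Fin n, Odd ((σ (k,false) : ℕ) + (σ (k,true) : ℕ))) ∧
      (∀ i (k k' : Fin n), k ≠ k' → g i (σ (k,false)) ≠ g i (σ (k,true)) →
        g i (σ (k',false)) = g i (σ (k',true))) ∧
      (∀ i, (∃ k, g i (σ (k,false)) ≠ g i (σ (k,true))) ↔
        Odd ((Finset.univ.filter fun p => g i p = true).card)) := by
  intro n
  induction n using Nat.strong_induction_on with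
  | _ n IH =>
  intro hn ι g hcross hlam
  rcases n with _ | n'
  · omega
  rcases Nat.eq_zero_or_pos n' with rfl | hn'
  · -- base case : n = 1
    have hbij : Function.Bijective (fun x : Fin (0+1) × Bool => (cond x.2 1 0 : Fin (2*(0+1)))) := by
      decide
    refine ⟨Equiv.ofBijective _ hbij, ?_, ?_, ?_⟩
    · intro k
      have h0 : (Equiv.ofBijective _ hbij) (k, false) = (0 : Fin (2*(0+1))) := rfl
      have h1 : (Equiv.ofBijective _ hbij) (k, true) = (1 : Fin (2*(0+1))) := rfl
      rw [h0, h1]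
      decide
    · intro i k k' hne
      exact absurd (Fin.ext (by omega)) hne
    · intro i
      have hcardf : ((Finset.univ.filter fun p : Fin (2*(0+1)) => g i p = true).card)
          = (if g i 0 = true then 1 else 0) + (if g i 1 = true then 1 else 0) := by
        rw [Finset.card_filter]
        exact Fin.sum_univ_two _
      have h0 : ∀ k : Fin (0+1), (Equiv.ofBijective _ hbij) (k, false) = (0 : Fin (2*(0+1))) :=
        fun k => rfl
      have h1 : ∀ k : Fin (0+1), (Equiv.ofBijective _ hbij) (k, true) = (1 : Fin (2*(0+1))) :=
        fun k => rfl
      simp only [h0, h1, hcardf]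
      constructor
      · rintro ⟨k, hk⟩
        cases hg0 : g i 0 <;> cases hg1 : g i 1 <;>
          simp [hg0, hg1, Nat.odd_iff] <;> (rw [hg0, hg1] at hk; exact hk rfl)
      · intro hodd
        refine ⟨0, fun h => ?_⟩
        rw [h] at hodd
        cases hg1 : g i 1 <;> rw [hg1] at hodd <;> simp [Nat.odd_iff] at hodd
  -- inductive step : n = n' + 1 with n' ≥ 1
  haveI hK : NeZero (2*(n'+1)) := ⟨by omega⟩
  haveI hK' : NeZero (2*n') := ⟨by omega⟩
  have hrot : ∀ p : Fin (2*(n'+1)), finRotate (2*(n'+1)) p = p + 1 := finRotate_eq_add_one'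
  have hrot' : ∀ p : Fin (2*n'), finRotate (2*n') p = p + 1 := finRotate_eq_add_one'
  have hval1 : ((1 : Fin (2*(n'+1))) : ℕ) = 1 := by
    rw [Fin.val_one']; exact Nat.mod_eq_of_lt (by omega)
  -- the good position m
  obtain ⟨m, hm⟩ := exists_good (k := 2*(n'+1)) (by omega) ⟨n'+1, by ring⟩ g hcross hlam
  rw [hrot m] at hm
  have hmod : ∀ x : ℕ, x % (2*(n'+1)) % 2 = x % 2 := fun x => Nat.mod_mod_of_dvd x ⟨n'+1, rfl⟩
  have hm1val : ((m + 1 : Fin (2*(n'+1))) : ℕ) % 2 = (m.val + 1) % 2 := by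
    rw [Fin.val_add, hval1, hmod]
  have hmm1 : m ≠ m + 1 := by
    intro h
    have h1 : (1 : Fin (2*(n'+1))) = 0 := by
      have := left_eq_add.mp h
      exact this
    rw [Fin.ext_iff, hval1] at h1
    simp at h1
  -- the embedding of the smaller cyclic structure
  set ψ : Fin (2*n') → Fin (2*(n'+1)) :=
    fun p => m + (⟨p.val + 2, by omega⟩ : Fin (2*(n'+1))) with hψ
  have hψinj : Function.Injective ψ := by
    intro p q h
    rw [hψ] at h
    have h2 := add_left_cancel h
    rw [Fin.ext_iff] at h2 ⊢
    simpa using h2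
  have hψm : ∀ p, ψ p ≠ m := by
    intro p h
    rw [hψ] at h
    have h2 : (⟨p.val + 2, by omega⟩ : Fin (2*(n'+1))) = 0 :=
      add_left_cancel (h.trans (add_zero m).symm)
    rw [Fin.ext_iff] at h2
    simpa using h2
  have hψm1 : ∀ p, ψ p ≠ m + 1 := by
    intro p h
    rw [hψ] at h
    have h2 : (⟨p.val + 2, by omega⟩ : Fin (2*(n'+1))) = 1 := add_left_cancel h
    rw [Fin.ext_iff, hval1] at h2
    simpa using h2
  have hψsurj : ∀ q : Fin (2*(n'+1)), q ≠ m → q ≠ m + 1 → ∃ p, ψ p = q := by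
    intro q hqm hqm1
    have hr0 : q - m ≠ 0 := sub_ne_zero_of_ne hqm
    have hr1 : q - m ≠ 1 := by
      intro h
      exact hqm1 ((sub_eq_iff_eq_add.mp h).trans (add_comm 1 m))
    have hrval : 2 ≤ (q - m).val := by
      rcases Nat.lt_or_ge (q - m).val 2 with h | h
      · interval_cases hv : (q - m).val
        · exact absurd (Fin.ext (by simpa using hv)) hr0
        · exact absurd (Fin.ext (by rw [hval1]; simpa using hv)) hr1
      · exact h
    refine ⟨⟨(q - m).val - 2, by omega⟩, ?_⟩
    show m + (⟨(q - m).val - 2 + 2, by omega⟩ : Fin (2*(n'+1))) = q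
    have he : (⟨(q - m).val - 2 + 2, by omega⟩ : Fin (2*(n'+1))) = q - m := by
      apply Fin.ext; simp; omega
    have h2 : m + (q - m) = q := by rw [add_comm m (q - m), sub_add_cancel]
    exact (congrArg (fun z => m + z) he).trans h2
  have hψval : ∀ p, (ψ p).val = (m.val + (p.val + 2)) % (2*(n'+1)) := by
    intro p; rw [hψ]; rw [Fin.val_add]
  have hψpar : ∀ p, (ψ p).val % 2 = (m.val + p.val) % 2 := by
    intro p
    rw [hψval, hmod]
    omega
  -- the restricted family
  set g' : ι → Fin (2*n') → Bool := fun i p => g i (ψ p) with hg'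
  -- step identities
  set L : Fin (2*n') := ⟨2*n' - 1, by omega⟩ with hL
  have hLval : (L : ℕ) = 2*n' - 1 := by rw [hL]
  have hne_val : ∀ p : Fin (2*n'), p ≠ L → p.val < 2*n' - 1 := by
    intro p hp
    have := p.isLt
    rcases Nat.lt_or_ge p.val (2*n'-1) with h | h
    · exact h
    · exact absurd (Fin.ext (by rw [hLval]; omega)) hp
  have hstep : ∀ p : Fin (2*n'), p ≠ L → ψ (p + 1) = ψ p + 1 := by
    intro p hp
    have hpv := hne_val p hp
    have h1v : ((p + 1 : Fin (2*n')) : ℕ) = p.val + 1 := by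
      rw [Fin.val_add, Fin.val_one']
      rw [Nat.mod_eq_of_lt (show (1:ℕ) < 2*n' by omega)]
      rw [Nat.mod_eq_of_lt (by omega)]
    apply Fin.ext
    have hr : ((ψ p + 1 : Fin (2*(n'+1))) : ℕ) = (↑m + (↑p + 2) + 1) % (2*(n'+1)) := by
      rw [Fin.val_add, hval1, hψval, Nat.mod_add_mod]
    have hl : ((ψ (p + 1) : Fin (2*(n'+1))) : ℕ) = (↑m + (↑p + 1 + 2)) % (2*(n'+1)) := by
      rw [hψval, h1v]
    rw [hl, hr]
    congr 1
  have hL1 : (L + 1 : Fin (2*n')) = 0 := by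
    apply Fin.ext
    rw [Fin.val_add, Fin.val_one', Fin.val_zero, hLval]
    rw [Nat.mod_eq_of_lt (show (1:ℕ) < 2*n' by omega)]
    have h2 : 2*n' - 1 + 1 = 2*n' := by omega
    rw [h2, Nat.mod_self]
  have hψL : ψ L = m - 1 := by
    have h : ψ L + 1 = m := by
      apply Fin.ext
      have hr : ((ψ L + 1 : Fin (2*(n'+1))) : ℕ) = (↑m + (↑L + 2) + 1) % (2*(n'+1)) := by
        rw [Fin.val_add, hval1, hψval, Nat.mod_add_mod]
      rw [hr, hLval]
      have h2 : m.val + (2*n' - 1 + 2) + 1 = m.val + 2*(n'+1) := by omega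
      rw [h2, Nat.add_mod_right, Nat.mod_eq_of_lt m.isLt]
    exact eq_sub_of_add_eq h
  have hψ0 : ψ 0 = m + 1 + 1 := by
    apply Fin.ext
    have hr : ((m + 1 + 1 : Fin (2*(n'+1))) : ℕ) = (↑m + 1 + 1) % (2*(n'+1)) := by
      rw [Fin.val_add, hval1, Fin.val_add, hval1, Nat.mod_add_mod]
    have hl : ((ψ 0 : Fin (2*(n'+1))) : ℕ) = (↑m + ((0:ℕ) + 2)) % (2*(n'+1)) := by
      rw [hψval, Fin.val_zero]
    rw [hl, hr]
  have hm1m : m - 1 + 1 = m := sub_add_cancel m 1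
  -- crossings of the restricted family are at most 2
  have hcross2 : ∀ i, ((Finset.univ.filter fun q : Fin (2*(n'+1)) =>
      g i q ≠ g i (q + 1)).card ≤ 2) := by
    intro i
    have := hcross i
    simp only [hrot] at this
    exact this
  have hcross' : ∀ i, ((Finset.univ.filter fun p : Fin (2*n') =>
      g' i p ≠ g' i (finRotate (2*n') p)).card ≤ 2) := by
    intro i
    simp only [hrot']
    set F : Fin (2*n') → Fin (2*(n'+1)) := fun p =>
      if p = L then
        (if g i (m - 1) ≠ g i m then m - 1 else if g i m ≠ g i (m+1) then m else m + 1)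
      else ψ p with hF
    refine le_trans (Finset.card_le_card_of_injOn F ?_ ?_) (hcross2 i)
    · intro p hp
      rw [Finset.mem_coe, Finset.mem_filter] at hp ⊢
      refine ⟨Finset.mem_univ _, ?_⟩
      by_cases hpL : p = L
      · subst hpL
        have harc : g i (m - 1) ≠ g i (m + 1 + 1) := by
          have := hp.2
          rw [hg'] at this
          dsimp only at this
          rw [hL1, hψL, hψ0] at this
          exact this
        simp only [hF, if_pos rfl]
        by_cases h1 : g i (m - 1) ≠ g i m
        · rw [if_pos h1, hm1m]; exact h1
        · rw [if_neg h1]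
          have h1' : g i (m - 1) = g i m := not_ne_iff.mp h1
          by_cases h2 : g i m ≠ g i (m+1)
          · rw [if_pos h2]; exact h2
          · rw [if_neg h2]
            have h2' : g i m = g i (m+1) := not_ne_iff.mp h2
            intro h3
            exact harc (h1'.trans (h2'.trans h3))
      · simp only [hF]
        rw [if_neg hpL]
        have := hp.2
        rw [hg'] at this
        dsimp only at this
        rw [hstep p hpL] at this
        exact this
    · intro p hp q hq h
      by_cases hpL : p = L <;> by_cases hqL : q = L
      · rw [hpL, hqL]
      · exfalso
        simp only [hF] at h
        rw [if_pos hpL, if_neg hqL] at h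
        split_ifs at h with h1 h2
        · rw [← hψL] at h
          exact hqL (hψinj h.symm)
        · exact hψm q h.symm
        · exact hψm1 q h.symm
      · exfalso
        simp only [hF] at h
        rw [if_neg hpL, if_pos hqL] at h
        split_ifs at h with h1 h2
        · rw [← hψL] at h
          exact hpL (hψinj h)
        · exact hψm p h
        · exact hψm1 p h
      · simp only [hF] at h
        rw [if_neg hpL, if_neg hqL] at h
        exact hψinj h
  have hlam' : ∀ i i', (∀ p, g' i p = true → g' i' p = true) ∨
      (∀ p, g' i' p = true → g' i p = true) ∨
      (∀ p, ¬(g' i p = true ∧ g' i' p = true)) ∨ (∀ p, g' i p = true ∨ g' i' p = true) := by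
    intro i i'
    rcases hlam i i' with h | h | h | h
    · exact Or.inl (fun p => h (ψ p))
    · exact Or.inr (Or.inl (fun p => h (ψ p)))
    · exact Or.inr (Or.inr (Or.inl (fun p => h (ψ p))))
    · exact Or.inr (Or.inr (Or.inr (fun p => h (ψ p))))
  obtain ⟨σ', hσ'1, hσ'2, hσ'3⟩ := IH n' (by omega) hn' g' hcross' hlam'
  -- cardinality bookkeeping
  have hSrel : ∀ i, (Finset.univ.filter fun p : Fin (2*(n'+1)) => g i p = true).card =
      (Finset.univ.filter fun p : Fin (2*n') => g' i p = true).card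
      + ((if g i m = true then 1 else 0) + (if g i (m+1) = true then 1 else 0)) := by
    intro i
    have himg : (Finset.univ.filter fun p : Fin (2*n') => g' i p = true).image ψ =
        (Finset.univ.filter fun q : Fin (2*(n'+1)) => g i q = true) \ {m, m+1} := by
      ext q
      simp only [Finset.mem_image, Finset.mem_filter, Finset.mem_univ, true_and,
        Finset.mem_sdiff, Finset.mem_insert, Finset.mem_singleton, hg']
      constructor
      · rintro ⟨p, hp, rfl⟩
        exact ⟨hp, by push_neg; exact ⟨hψm p, hψm1 p⟩⟩
      · rintro ⟨hgq, hq⟩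
        push_neg at hq
        obtain ⟨p, rfl⟩ := hψsurj q hq.1 hq.2
        exact ⟨p, hgq, rfl⟩
    have hcard1 : (Finset.univ.filter fun p : Fin (2*n') => g' i p = true).card =
        ((Finset.univ.filter fun q : Fin (2*(n'+1)) => g i q = true) \ {m, m+1}).card := by
      rw [← himg, Finset.card_image_of_injective _ hψinj]
    have hcard2 := Finset.card_sdiff_add_card_inter
      (Finset.univ.filter fun q : Fin (2*(n'+1)) => g i q = true) ({m, m+1} : Finset _)
    have hinter : ((Finset.univ.filter fun q : Fin (2*(n'+1)) => g i q = true) ∩ {m, m+1}).card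
        = (if g i m = true then 1 else 0) + (if g i (m+1) = true then 1 else 0) := by
      have hss : (Finset.univ.filter fun q : Fin (2*(n'+1)) => g i q = true) ∩ {m, m+1} =
          ({m, m+1} : Finset _).filter (fun q => g i q = true) := by
        ext q
        simp only [Finset.mem_inter, Finset.mem_filter, Finset.mem_univ, true_and]
        tauto
      rw [hss]
      rw [Finset.filter_insert, Finset.filter_singleton]
      split_ifs with h1 h2 h2 <;> simp [hmm1]
    omega
  have hpar1 : ∀ i, g i m ≠ g i (m+1) →
      (Odd ((Finset.univ.filter fun p : Fin (2*(n'+1)) => g i p = true).card) ↔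
        ¬ Odd ((Finset.univ.filter fun p : Fin (2*n') => g' i p = true).card)) := by
    intro i h
    have hrel := hSrel i
    cases hgm : g i m <;> cases hgm1 : g i (m+1)
    · exact absurd (hgm.trans hgm1.symm) h
    · rw [hgm, hgm1] at hrel; simp only [Bool.false_eq_true, if_false, if_true] at hrel
      rw [hrel]; simp only [Nat.odd_iff]; omega
    · rw [hgm, hgm1] at hrel; simp only [Bool.false_eq_true, if_false, if_true] at hrel
      rw [hrel]; simp only [Nat.odd_iff]; omega
    · exact absurd (hgm.trans hgm1.symm) h
  have hpar2 : ∀ i, g i m = g i (m+1) →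
      (Odd ((Finset.univ.filter fun p : Fin (2*(n'+1)) => g i p = true).card) ↔
        Odd ((Finset.univ.filter fun p : Fin (2*n') => g' i p = true).card)) := by
    intro i h
    have hrel := hSrel i
    cases hgm : g i m <;> cases hgm1 : g i (m+1)
    · rw [hgm, hgm1] at hrel; simp only [Bool.false_eq_true, if_false] at hrel
      rw [hrel]; simp only [Nat.odd_iff]; omega
    · rw [hgm, hgm1] at h; exact absurd h (by simp)
    · rw [hgm, hgm1] at h; exact absurd h (by simp)
    · rw [hgm, hgm1] at hrel; simp only [if_true] at hrel
      rw [hrel]; simp only [Nat.odd_iff]; omega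
  -- assembling the bijection
  set f : Fin (n'+1) × Bool → Fin (2*(n'+1)) := fun x =>
    if h : (x.1 : ℕ) < n' then ψ (σ' (⟨x.1.val, h⟩, x.2)) else (cond x.2 (m+1) m) with hf
  have hfinj : Function.Injective f := by
    rintro ⟨a, b⟩ ⟨c, d⟩ h
    rw [hf] at h
    dsimp only at h
    split_ifs at h with h1 h2 h2
    · have h3 := σ'.injective (hψinj h)
      simp only [Prod.mk.injEq] at h3
      have h5 := congrArg Fin.val h3.1
      exact Prod.ext (Fin.ext h5) h3.2
    · exfalso
      cases d
      · exact hψm _ h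
      · exact hψm1 _ h
    · exfalso
      cases b
      · exact hψm _ h.symm
      · exact hψm1 _ h.symm
    · have h4 : a = c := by
        apply Fin.ext
        have := a.isLt; have := c.isLt
        omega
      cases b <;> cases d
      · exact Prod.ext h4 rfl
      · exact absurd h hmm1
      · exact absurd h.symm hmm1
      · exact Prod.ext h4 rfl
  have hfbij : Function.Bijective f := by
    rw [Fintype.bijective_iff_injective_and_card]
    refine ⟨hfinj, ?_⟩
    simp only [Fintype.card_prod, Fintype.card_fin, Fintype.card_bool]
    ring
  set σ : Fin (n'+1) × Bool ≃ Fin (2*(n'+1)) := Equiv.ofBijective f hfbij with hσdef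
  have hold : ∀ (κ : Fin (n'+1)) (hκ : (κ : ℕ) < n') (b : Bool),
      σ (κ, b) = ψ (σ' (⟨κ.val, hκ⟩, b)) := by
    intro κ hκ b
    show f (κ, b) = _
    rw [hf]
    dsimp only
    rw [dif_pos hκ]

  have hlstf : ∀ (κ : Fin (n'+1)) (_ : ¬ (κ : ℕ) < n'), σ (κ, false) = m := by
    intro κ hκ
    show f (κ, false) = m
    rw [hf]
    dsimp only
    rw [dif_neg hκ]
    rfl
  have hlstt : ∀ (κ : Fin (n'+1)) (_ : ¬ (κ : ℕ) < n'), σ (κ, true) = m + 1 := by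
    intro κ hκ
    show f (κ, true) = m + 1
    rw [hf]
    dsimp only
    rw [dif_neg hκ]
    rfl
  refine ⟨σ, ?_, ?_, ?_⟩
  · -- parity
    intro κ
    by_cases hκ : (κ : ℕ) < n'
    · rw [hold κ hκ false, hold κ hκ true]
      have := hσ'1 ⟨κ.val, hκ⟩
      rw [Nat.odd_iff] at this ⊢
      have p1 := hψpar (σ' (⟨κ.val, hκ⟩, false))
      have p2 := hψpar (σ' (⟨κ.val, hκ⟩, true))
      omega
    · rw [hlstf κ hκ, hlstt κ hκ]
      rw [Nat.odd_iff]
      omega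
  · -- disjointness
    intro i κ κ' hne hsp
    by_cases hκ : (κ : ℕ) < n' <;> by_cases hκ' : (κ' : ℕ) < n'
    · rw [hold κ hκ false, hold κ hκ true] at hsp
      rw [hold κ' hκ' false, hold κ' hκ' true]
      refine hσ'2 i ⟨κ.val, hκ⟩ ⟨κ'.val, hκ'⟩ (fun h => hne ?_) hsp
      rw [Fin.ext_iff] at h
      exact Fin.ext (by simpa using h)
    · rw [hold κ hκ false, hold κ hκ true] at hsp
      rw [hlstf κ' hκ', hlstt κ' hκ']
      by_contra hne2
      have hoddS := hm i hne2
      have hnodd := (hpar1 i hne2).mp hoddS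
      exact hnodd ((hσ'3 i).mp ⟨(⟨κ.val, hκ⟩, false).1, hsp⟩)
    · rw [hlstf κ hκ, hlstt κ hκ] at hsp
      rw [hold κ' hκ' false, hold κ' hκ' true]
      have hoddS := hm i hsp
      have hnodd := (hpar1 i hsp).mp hoddS
      by_contra hne2
      exact hnodd ((hσ'3 i).mp ⟨⟨κ'.val, hκ'⟩, hne2⟩)
    · exfalso
      have := κ.isLt; have := κ'.isLt
      exact hne (Fin.ext (by omega))
  · -- union
    intro i
    constructor
    · rintro ⟨κ, hκsp⟩
      by_cases hκ : (κ : ℕ) < n'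
      · rw [hold κ hκ false, hold κ hκ true] at hκsp
        have hS' : Odd ((Finset.univ.filter fun p : Fin (2*n') => g' i p = true).card) :=
          (hσ'3 i).mp ⟨⟨κ.val, hκ⟩, hκsp⟩
        by_cases hc : g i m = g i (m+1)
        · exact (hpar2 i hc).mpr hS'
        · exact hm i hc
      · rw [hlstf κ hκ, hlstt κ hκ] at hκsp
        exact hm i hκsp
    · intro hodd
      by_cases hc : g i m = g i (m+1)
      · have hS' := (hpar2 i hc).mp hodd
        obtain ⟨κ₀, hκ₀⟩ := (hσ'3 i).mpr hS'
        refine ⟨⟨κ₀.val, by omega⟩, ?_⟩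
        have hκv : ((⟨κ₀.val, by omega⟩ : Fin (n'+1)) : ℕ) < n' := κ₀.isLt
        rw [hold _ hκv false, hold _ hκv true]
        have : (⟨((⟨κ₀.val, by omega⟩ : Fin (n'+1)) : ℕ), hκv⟩ : Fin n') = κ₀ := Fin.ext rfl
        rw [this]
        exact hκ₀
      · refine ⟨⟨n', by omega⟩, ?_⟩
        have hκ : ¬ ((⟨n', by omega⟩ : Fin (n'+1)) : ℕ) < n' := by simp
        rw [hlstf _ hκ, hlstt _ hκ]
        exact hc

lemma deleteEdges_eq_of_not_mem {V : Type*} {G : SimpleGraph V} {e : Sym2 V}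
    (he : e ∉ G.edgeSet) : G.deleteEdges {e} = G := by
  ext a b
  rw [SimpleGraph.deleteEdges_adj]
  simp only [Set.mem_singleton_iff, and_iff_left_iff_imp]
  rintro hab rfl
  exact he hab

lemma orderIso_cast {α : Type*} [LinearOrder α] (s : Finset α) {K : ℕ} (h : s.card = K)
    (p : Fin s.card) :
    (s.orderIsoOfFin rfl p : α) = s.orderIsoOfFin h (Fin.cast h p) := by
  subst h; rfl

lemma finRotate_cast {c K : ℕ} (h : c = K) (m : Fin c) :
    finRotate K (Fin.cast h m) = Fin.cast h (finRotate c m) := by subst h; rfl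

/-- **Pairing lemma**: if `X = {i₁ < ⋯ < i_{2n}}` (`n ≥ 1`) is nicely ordered,
then the `2n` indices can be partitioned into `n` pairs `(p_k, q_k)` of
opposite parity such that the paths `P_{i_{p_k} i_{q_k}}` are pairwise disjoint
and their union is exactly the set `O_X` of odd edges. -/
theorem pairing_of_nicelyOrdered (N n : ℕ) (hn : 1 ≤ n)
    (T : SimpleGraph (Fin N)) (hT : T.IsTree)
    (X : Finset (Fin N)) (hcard : X.card = 2 * n) (hX : NicelyOrdered T X) :
    ∃ σ : Fin n × Bool ≃ Fin (2 * n),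
      (∀ k : Fin n, Odd ((σ (k, false) : ℕ) + (σ (k, true) : ℕ))) ∧
      (∀ k k' : Fin n, k ≠ k' →
        Disjoint
          {e | EdgeOnPath T e (X.orderIsoOfFin hcard (σ (k, false)))
              (X.orderIsoOfFin hcard (σ (k, true)))}
          {e | EdgeOnPath T e (X.orderIsoOfFin hcard (σ (k', false)))
              (X.orderIsoOfFin hcard (σ (k', true)))}) ∧
      (⋃ k : Fin n,
          {e | EdgeOnPath T e (X.orderIsoOfFin hcard (σ (k, false)))
              (X.orderIsoOfFin hcard (σ (k, true)))}) =
        {e | OddEdge T X e} := by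
  have hX0 : X.Nonempty := by rw [← Finset.card_pos, hcard]; omega
  obtain ⟨v₀, hv₀⟩ := hX0
  set j : Fin (2*n) → Fin N := fun p => (X.orderIsoOfFin hcard p : Fin N) with hj
  set g : Sym2 (Fin N) → Fin (2*n) → Bool :=
    fun e p => decide ((T.deleteEdges {e}).Reachable (j p) v₀) with hg
  have hgiff : ∀ e p, g e p = true ↔ (T.deleteEdges {e}).Reachable (j p) v₀ := by
    intro e p; simp [hg]
  have hEoP : ∀ (e : Sym2 (Fin N)) x y, EdgeOnPath T e x y ↔
      ¬ ((T.deleteEdges {e}).Reachable x v₀ ↔ (T.deleteEdges {e}).Reachable y v₀) := by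
    intro e x y
    unfold EdgeOnPath
    rw [reach_iff_side hT v₀ e x y]
  have hgne : ∀ e p q, (g e p ≠ g e q) ↔ EdgeOnPath T e (j p) (j q) := by
    intro e p q
    rw [hEoP, Ne, Bool.eq_iff_iff, hgiff, hgiff]
  have hnotedge : ∀ e, e ∉ T.edgeSet → ∀ q, g e q = true := by
    intro e he q
    rw [hgiff, deleteEdges_eq_of_not_mem he]
    exact hT.1.preconnected _ _
  have hjmem : ∀ p, j p ∈ X := by
    intro p; rw [hj]; exact (X.orderIsoOfFin hcard p).2
  have hjinj : Function.Injective j := by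
    intro p q h
    rw [hj] at h
    exact (X.orderIsoOfFin hcard).injective (Subtype.coe_injective h)
  -- crossing bound
  have hcross : ∀ e, ((Finset.univ.filter fun p => g e p ≠ g e (finRotate (2*n) p)).card ≤ 2) := by
    intro e
    by_cases he : e ∈ T.edgeSet
    · have h2 := hX e he
      have hcast : ∀ m : Fin X.card,
          ((X.orderIsoOfFin rfl m : Fin N) = j (Fin.cast hcard m)) ∧
          ((X.orderIsoOfFin rfl (finRotate X.card m) : Fin N)
            = j (finRotate (2*n) (Fin.cast hcard m))) := by
        intro m
        constructor
        · rw [orderIso_cast X hcard, hj]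
        · rw [orderIso_cast X hcard, finRotate_cast hcard, hj]
      have hset : {p : Fin (2*n) | EdgeOnPath T e (j p) (j (finRotate (2*n) p))} =
          (fun m => Fin.cast hcard m) '' {m : Fin X.card |
            EdgeOnPath T e (X.orderIsoOfFin rfl m) (X.orderIsoOfFin rfl (finRotate X.card m))} := by
        ext q
        simp only [Set.mem_image, Set.mem_setOf_eq]
        constructor
        · intro hq
          refine ⟨Fin.cast hcard.symm q, ?_, Fin.ext rfl⟩
          rw [(hcast _).1, (hcast _).2]
          have hqq : Fin.cast hcard (Fin.cast hcard.symm q) = q := Fin.ext rfl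
          rw [hqq]
          exact hq
        · rintro ⟨m, hm, rfl⟩
          rw [(hcast m).1, (hcast m).2] at hm
          exact hm
      have hcastinj : Function.Injective (fun m : Fin X.card => Fin.cast hcard m) := by
        intro x y hxy
        apply Fin.ext
        simpa using congrArg Fin.val hxy
      have h3 : {p : Fin (2*n) | EdgeOnPath T e (j p) (j (finRotate (2*n) p))}.ncard ≤ 2 := by
        rw [hset, Set.ncard_image_of_injective _ hcastinj]
        exact h2
      have h4 : {p : Fin (2*n) | EdgeOnPath T e (j p) (j (finRotate (2*n) p))} =
          ↑(Finset.univ.filter fun p => g e p ≠ g e (finRotate (2*n) p)) := by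
        ext p
        simp only [Set.mem_setOf_eq, Finset.coe_filter, Finset.mem_univ, true_and,
          Set.mem_setOf_eq]
        exact (hgne e p (finRotate (2*n) p)).symm
      rw [h4, Set.ncard_coe_finset] at h3
      exact h3
    · have hconst : (Finset.univ.filter fun p => g e p ≠ g e (finRotate (2*n) p)) = ∅ := by
        apply Finset.filter_eq_empty_iff.mpr
        intro p _
        rw [hnotedge e he p, hnotedge e he (finRotate (2*n) p)]
        simp
      rw [hconst, Finset.card_empty]
      omega
  -- laminarity
  have hlam : ∀ e f, (∀ p, g e p = true → g f p = true) ∨ (∀ p, g f p = true → g e p = true) ∨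
      (∀ p, ¬(g e p = true ∧ g f p = true)) ∨ (∀ p, g e p = true ∨ g f p = true) := by
    intro e f
    by_cases he : e ∈ T.edgeSet
    · by_cases hf : f ∈ T.edgeSet
      · rcases tree_laminar hT v₀ he hf with h | h | h | h
        · exact Or.inr (Or.inl (fun p hp => (hgiff e p).mpr (h _ ((hgiff f p).mp hp))))
        · exact Or.inl (fun p hp => (hgiff f p).mpr (h _ ((hgiff e p).mp hp)))
        · exact Or.inr (Or.inr (Or.inl (fun p ⟨h1, h2⟩ =>
            h _ ⟨(hgiff e p).mp h1, (hgiff f p).mp h2⟩)))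
        · refine Or.inr (Or.inr (Or.inr (fun p => ?_)))
          rcases h (j p) with h' | h'
          · exact Or.inl ((hgiff e p).mpr h')
          · exact Or.inr ((hgiff f p).mpr h')
      · exact Or.inr (Or.inr (Or.inr (fun p => Or.inr (hnotedge f hf p))))
    · exact Or.inr (Or.inr (Or.inr (fun p => Or.inl (hnotedge e he p))))
  -- odd edge characterisation
  have hodd : ∀ e, OddEdge T X e ↔ Odd ((Finset.univ.filter fun p => g e p = true).card) := by
    intro e
    induction e using Sym2.ind with
    | _ u v =>
    by_cases he : s(u,v) ∈ T.edgeSet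
    · have hadj : T.Adj u v := T.mem_edgeSet.mp he
      have dich := fun z => reach_endpoint hT.1 hadj z
      have nr := not_reach_endpoints hT hadj
      have hncard : ∀ w, {x : Fin N | x ∈ X ∧ (T.deleteEdges {s(u,v)}).Reachable w x}.ncard =
          (X.filter fun z => (T.deleteEdges {s(u,v)}).Reachable w z).card := by
        intro w
        rw [← Set.ncard_coe_finset]
        congr 1
        ext z
        simp
      have hpart : (X.filter fun z => (T.deleteEdges {s(u,v)}).Reachable u z).card +
          (X.filter fun z => (T.deleteEdges {s(u,v)}).Reachable v z).card = 2*n := by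
        have hsplit := Finset.card_filter_add_card_filter_not
            (s := X) (p := fun z => (T.deleteEdges {s(u,v)}).Reachable u z)
        have hneg : (X.filter fun a => ¬ (T.deleteEdges {s(u,v)}).Reachable u a) =
            (X.filter fun z => (T.deleteEdges {s(u,v)}).Reachable v z) := by
          apply Finset.filter_congr
          intro z _
          constructor
          · intro hnu
            exact (dich z).resolve_left hnu
          · intro h2 h1
            exact nr (h1.trans h2.symm)
        rw [hneg] at hsplit
        rw [← hcard]
        exact hsplit
      have hOiff : OddEdge T X s(u,v) ↔
          (Odd (X.filter fun z => (T.deleteEdges {s(u,v)}).Reachable u z).card ∧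
           Odd (X.filter fun z => (T.deleteEdges {s(u,v)}).Reachable v z).card) := by
        constructor
        · rintro ⟨_, h⟩
          constructor
          · rw [← hncard u]; exact h u (Sym2.mem_mk_left u v)
          · rw [← hncard v]; exact h v (Sym2.mem_mk_right u v)
        · rintro ⟨h1, h2⟩
          refine ⟨he, ?_⟩
          intro w hw
          rcases Sym2.mem_iff.mp hw with rfl | rfl
          · rw [hncard w]; exact h1
          · rw [hncard w]; exact h2
      have hcount : ∀ w, (T.deleteEdges {s(u,v)}).Reachable w v₀ →
          (Finset.univ.filter fun p => g s(u,v) p = true).card =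
          (X.filter fun z => (T.deleteEdges {s(u,v)}).Reachable w z).card := by
        intro w hw0
        have hsides : ∀ z, ((T.deleteEdges {s(u,v)}).Reachable z v₀ ↔
            (T.deleteEdges {s(u,v)}).Reachable w z) := by
          intro z
          constructor
          · intro h; exact hw0.trans h.symm
          · intro h; exact h.symm.trans hw0
        apply Finset.card_bij (fun p _ => j p)
        · intro p hp
          rw [Finset.mem_filter] at hp ⊢
          refine ⟨hjmem p, ?_⟩
          exact (hsides (j p)).mp ((hgiff _ p).mp hp.2)
        · intro p _ q _ h
          exact hjinj h
        · intro z hz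
          rw [Finset.mem_filter] at hz
          refine ⟨(X.orderIsoOfFin hcard).symm ⟨z, hz.1⟩, ?_, ?_⟩
          · rw [Finset.mem_filter]
            refine ⟨Finset.mem_univ _, ?_⟩
            rw [hgiff]
            have hjz : j ((X.orderIsoOfFin hcard).symm ⟨z, hz.1⟩) = z := by
              rw [hj]
              simp
            rw [hjz]
            exact (hsides z).mpr hz.2
          · rw [hj]; simp
      rcases dich v₀ with hv | hv
      · rw [hOiff, hcount u hv]
        simp only [Nat.odd_iff]
        omega
      · rw [hOiff, hcount v hv]
        simp only [Nat.odd_iff]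
        omega
    · have hall : (Finset.univ.filter fun p => g s(u,v) p = true) = Finset.univ :=
        Finset.filter_true_of_mem (fun p _ => hnotedge s(u,v) he p)
      rw [hall]
      constructor
      · intro h; exact absurd h.1 he
      · intro h
        rw [Finset.card_univ, Fintype.card_fin, Nat.odd_iff] at h
        omega
  obtain ⟨σ, hσ1, hσ2, hσ3⟩ := comb n hn g hcross hlam
  refine ⟨σ, hσ1, ?_, ?_⟩
  · intro k k' hne
    rw [Set.disjoint_left]
    intro e h1 h2
    rw [Set.mem_setOf_eq] at h1 h2
    have hg1 : g e (σ (k, false)) ≠ g e (σ (k, true)) := (hgne e _ _).mpr h1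
    have hg2 : g e (σ (k', false)) ≠ g e (σ (k', true)) := (hgne e _ _).mpr h2
    exact hg2 (hσ2 e k k' hne hg1)
  · ext e
    simp only [Set.mem_iUnion, Set.mem_setOf_eq]
    constructor
    · rintro ⟨k, hk⟩
      exact (hodd e).mpr ((hσ3 e).mp ⟨k, (hgne e _ _).mpr hk⟩)
    · intro hOdd
      obtain ⟨k, hk⟩ := (hσ3 e).mpr ((hodd e).mp hOdd)
      exact ⟨k, (hgne e _ _).mp hk⟩
end
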